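/- For any two Boolean networks f, g of dimension n, the following are equivalent: (1) MT(f) = MT(g); (2) M(f) = M(g) and T_f(x) = T_g(x) for all x ∈ M(f); (3) T_f(x) = T_g(x) for all x ∈ M(f) ∪ M(g); (4) f^M = g^M. -/
import Mathlib


/-!  Common definitions: Boolean networks on `Fin n → Bool`. -/

/-- The update `f^{(S)}` of the coordinates in `S` according to `f`. -/
def upd {n : ℕ} (f : (Fin n → Bool) → Fin n → Bool) (S : Finset (Fin n)) :
    (Fin n → Bool) → Fin n → Bool :=
  fun x i => if i ∈ S then f x i else x i

/-- `f^{(S,T)} = f^{(T)} ∘ f^{(S)}`. -/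
def upd2 {n : ℕ} (f : (Fin n → Bool) → Fin n → Bool) (S T : Finset (Fin n)) :
    (Fin n → Bool) → Fin n → Bool :=
  upd f T ∘ upd f S

/-- `Δ(x,y)`, the set of coordinates where `x` and `y` differ. -/
def delta {n : ℕ} (x y : Fin n → Bool) : Set (Fin n) := {i | x i ≠ y i}

/-- Hamming distance. -/
noncomputable def hdist {n : ℕ} (x y : Fin n → Bool) : ℕ := (delta x y).ncard

/-- The interval (subcube) `[x,y]`. -/
def interval {n : ℕ} (x y : Fin n → Bool) : Set (Fin n → Bool) :=
  {z | delta x z ⊆ delta x y}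

/-- A subcube of `𝔹^n`: fix the coordinates in `S` to `0` and those in `T` to `1`. -/
def IsSubcube {n : ℕ} (X : Set (Fin n → Bool)) : Prop :=
  ∃ S T : Set (Fin n), Disjoint S T ∧
    X = {x | (∀ i ∈ S, x i = false) ∧ (∀ i ∈ T, x i = true)}

/-- The partial order `f ⊑ g` on Boolean networks. -/
def BNle {n : ℕ} (f g : (Fin n → Bool) → Fin n → Bool) : Prop :=
  ∀ x, delta x (f x) ⊆ delta x (g x)

/-- A trapspace of `f`: an invariant subcube. -/
def IsTrapspace {n : ℕ} (f : (Fin n → Bool) → Fin n → Bool)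
    (X : Set (Fin n → Bool)) : Prop :=
  IsSubcube X ∧ ∀ x ∈ X, f x ∈ X

/-- The collection of all trapspaces of `f`. -/
def trapspaces {n : ℕ} (f : (Fin n → Bool) → Fin n → Bool) :
    Set (Set (Fin n → Bool)) :=
  {X | IsTrapspace f X}

/-- The principal trapspace `T_f(x)`: the smallest trapspace of `f` containing `x`. -/
def Tprin {n : ℕ} (f : (Fin n → Bool) → Fin n → Bool) (x : Fin n → Bool) :
    Set (Fin n → Bool) :=
  ⋂₀ {X | IsTrapspace f X ∧ x ∈ X}

/-- The collection of principal trapspaces of `f`. -/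
def PT {n : ℕ} (f : (Fin n → Bool) → Fin n → Bool) : Set (Set (Fin n → Bool)) :=
  {X | ∃ x, X = Tprin f x}

-- The opposite of `x` in a subcube `X` containing `x`: the coordinate `i` is flipped
-- iff some element of `X` differs from `x` there; so `[x, opp X x] = X` when `X` is a
-- subcube containing `x`.
open scoped Classical in
noncomputable def opp {n : ℕ} (X : Set (Fin n → Bool)) (x : Fin n → Bool) :
    Fin n → Bool :=
  fun i => if ∃ y ∈ X, y i ≠ x i then !(x i) else x i

/-- The trapping closure `f^T`, characterised by `[x, f^T(x)] = T_f(x)`. -/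
noncomputable def trapClosure {n : ℕ} (f : (Fin n → Bool) → Fin n → Bool) :
    (Fin n → Bool) → Fin n → Bool :=
  fun x => opp (Tprin f x) x

/-- The general asynchronous graph of `f`, as a relation on `𝔹^n`. -/
def GA {n : ℕ} (f : (Fin n → Bool) → Fin n → Bool) :
    (Fin n → Bool) → (Fin n → Bool) → Prop :=
  fun x y => ∃ S : Finset (Fin n), y = upd f S x

/-- The asynchronous graph of `f`, as a relation on `𝔹^n`. -/
def Agraph {n : ℕ} (f : (Fin n → Bool) → Fin n → Bool) :
    (Fin n → Bool) → (Fin n → Bool) → Prop :=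
  fun x y => ∃ i : Fin n, y = upd f {i} x

/-- The trapping graph of `f`: an edge `(x,y)` iff `y ∈ T_f(x)`. -/
def TG {n : ℕ} (f : (Fin n → Bool) → Fin n → Bool) :
    (Fin n → Bool) → (Fin n → Bool) → Prop :=
  fun x y => y ∈ Tprin f x

/-- A network is trapping if its general asynchronous graph is transitive. -/
def IsTrapping {n : ℕ} (f : (Fin n → Bool) → Fin n → Bool) : Prop :=
  Transitive (GA f)

/-- A commutative Boolean network: `f^{(i,j)} = f^{(j,i)}` for all `i,j`. -/
def IsCommutative' {n : ℕ} (f : (Fin n → Bool) → Fin n → Bool) : Prop :=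
  ∀ i j : Fin n, upd2 f {i} {j} = upd2 f {j} {i}

/-- `𝒜(x)`: the intersection of all members of `𝒜` containing `x`
(`= 𝔹^n` if no member contains `x`, since `⋂₀ ∅ = univ`). -/
def collAt {n : ℕ} (𝒜 : Set (Set (Fin n → Bool))) (x : Fin n → Bool) :
    Set (Fin n → Bool) :=
  ⋂₀ {A ∈ 𝒜 | x ∈ A}

/-- The network `F(𝒜)`, characterised by `[x, F(𝒜)(x)] = 𝒜(x)`. -/
noncomputable def Fnet {n : ℕ} (𝒜 : Set (Set (Fin n → Bool))) :
    (Fin n → Bool) → Fin n → Bool :=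
  fun x => opp (collAt 𝒜 x) x

/-- A collection of subcubes is pre-principal if `𝒬 = {𝒬(x) : x ∈ 𝔹^n}`. -/
def PrePrincipal {n : ℕ} (𝒬 : Set (Set (Fin n → Bool))) : Prop :=
  𝒬 = {X | ∃ x, X = collAt 𝒬 x}

/-- `λ(𝒜)`: unions of subcollections of `𝒜` that are subcubes. -/
def lamColl {n : ℕ} (𝒜 : Set (Set (Fin n → Bool))) : Set (Set (Fin n → Bool)) :=
  {X | ∃ ℛ ⊆ 𝒜, X = ⋃₀ ℛ ∧ IsSubcube X}

/-- `μ(𝒜) = {𝒜(x) : x ∈ 𝔹^n}`. -/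
def muColl {n : ℕ} (𝒜 : Set (Set (Fin n → Bool))) : Set (Set (Fin n → Bool)) :=
  {X | ∃ x, X = collAt 𝒜 x}

/-- A pre-ideal collection of subcubes. -/
def PreIdeal {n : ℕ} (𝒥 : Set (Set (Fin n → Bool))) : Prop :=
  Set.univ ∈ 𝒥 ∧
  (∀ A ∈ 𝒥, ∀ B ∈ 𝒥, (A ∩ B).Nonempty → A ∩ B ∈ 𝒥) ∧
  (∀ ℛ ⊆ 𝒥, IsSubcube (⋃₀ ℛ) → ⋃₀ ℛ ∈ 𝒥)

/-- The collection of minimal trapspaces of `f`. -/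
def MT {n : ℕ} (f : (Fin n → Bool) → Fin n → Bool) : Set (Set (Fin n → Bool)) :=
  {X | IsTrapspace f X ∧ ∀ Y, IsTrapspace f Y → ¬ Y ⊂ X}

/-- `M(f)`: the union of the minimal trapspaces of `f`. -/
def Mset {n : ℕ} (f : (Fin n → Bool) → Fin n → Bool) : Set (Fin n → Bool) :=
  ⋃₀ MT f

-- The min-trapping extension `f^M`: `[x, f^M(x)] = T_f(x)` if `x ∈ M(f)`,
-- and `f^M(x) = ¬x` otherwise.
open scoped Classical in
noncomputable def minExt {n : ℕ} (f : (Fin n → Bool) → Fin n → Bool) :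
    (Fin n → Bool) → Fin n → Bool :=
  fun x => if x ∈ Mset f then opp (Tprin f x) x else fun i => !(x i)


section Stmt9Aux

variable {n : ℕ}

/-- The subcube of points agreeing with `x` outside `D`. -/
def cubeOf (x : Fin n → Bool) (D : Set (Fin n)) : Set (Fin n → Bool) :=
  {z | ∀ i, i ∉ D → z i = x i}

lemma isSubcube_cubeOf (x : Fin n → Bool) (D : Set (Fin n)) : IsSubcube (cubeOf x D) := by
  refine ⟨{i | i ∉ D ∧ x i = false}, {i | i ∉ D ∧ x i = true}, ?_, ?_⟩
  · rw [Set.disjoint_left]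
    rintro i ⟨_, h1⟩ ⟨_, h2⟩
    simp [h1] at h2
  · ext z
    constructor
    · intro hz
      exact ⟨fun i hi => (hz i hi.1).trans hi.2, fun i hi => (hz i hi.1).trans hi.2⟩
    · rintro ⟨h1, h2⟩ i hi
      cases hx : x i
      · exact h1 i ⟨hi, hx⟩
      · exact h2 i ⟨hi, hx⟩

lemma subcube_eq_cubeOf {X : Set (Fin n → Bool)} {x : Fin n → Bool}
    (h : IsSubcube X) (hx : x ∈ X) :
    X = cubeOf x {i | ∃ y ∈ X, y i ≠ x i} := by
  obtain ⟨S, T, hST, hXeq⟩ := h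
  have hx' := hx
  rw [hXeq] at hx'
  ext z
  constructor
  · intro hz i hi
    simp only [Set.mem_setOf_eq, not_exists, not_and] at hi
    push_neg at hi
    exact hi z hz
  · intro hz
    rw [hXeq]
    refine ⟨fun i hiS => ?_, fun i hiT => ?_⟩
    · by_cases hD : ∃ y ∈ X, y i ≠ x i
      · obtain ⟨y, hy, hyi⟩ := hD
        rw [hXeq] at hy
        exact absurd ((hy.1 i hiS).trans (hx'.1 i hiS).symm) hyi
      · exact (hz i hD).trans (hx'.1 i hiS)
    · by_cases hD : ∃ y ∈ X, y i ≠ x i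
      · obtain ⟨y, hy, hyi⟩ := hD
        rw [hXeq] at hy
        exact absurd ((hy.2 i hiT).trans (hx'.2 i hiT).symm) hyi
      · exact (hz i hD).trans (hx'.2 i hiT)

lemma subcube_nonempty {X : Set (Fin n → Bool)} (h : IsSubcube X) : X.Nonempty := by
  classical
  obtain ⟨S, T, hST, rfl⟩ := h
  refine ⟨fun i => if i ∈ T then true else false, fun i hi => ?_, fun i hi => if_pos hi⟩
  exact if_neg (Set.disjoint_left.mp hST hi)

lemma mem_Tprin (f : (Fin n → Bool) → Fin n → Bool) (x : Fin n → Bool) : x ∈ Tprin f x :=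
  Set.mem_sInter.mpr fun _ hX => hX.2

lemma Tprin_subset {f : (Fin n → Bool) → Fin n → Bool} {X : Set (Fin n → Bool)}
    {x : Fin n → Bool} (hX : IsTrapspace f X) (hx : x ∈ X) : Tprin f x ⊆ X :=
  Set.sInter_subset_of_mem ⟨hX, hx⟩

lemma Tprin_isTrapspace (f : (Fin n → Bool) → Fin n → Bool) (x : Fin n → Bool) :
    IsTrapspace f (Tprin f x) := by
  constructor
  · have hEq : Tprin f x
        = cubeOf x {i | ∀ X, (IsTrapspace f X ∧ x ∈ X) → ∃ y ∈ X, y i ≠ x i} := by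
      ext z
      simp only [Tprin, Set.mem_sInter, Set.mem_setOf_eq, cubeOf]
      constructor
      · intro hz i hi
        push_neg at hi
        obtain ⟨X, hX, hall⟩ := hi
        have hz' : z ∈ X := hz X hX
        rw [subcube_eq_cubeOf hX.1.1 hX.2] at hz'
        refine hz' i ?_
        simp only [Set.mem_setOf_eq, not_exists, not_and]
        intro y hy
        simpa using hall y hy
      · intro hz X hX
        rw [subcube_eq_cubeOf hX.1.1 hX.2]
        intro i hiD
        refine hz i fun hall => hiD ?_
        exact hall X hX
    rw [hEq]
    exact isSubcube_cubeOf _ _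
  · intro z hz
    refine Set.mem_sInter.mpr fun X hX => hX.1.2 z (Set.mem_sInter.mp hz X hX)

lemma Tprin_eq_of_MT {f : (Fin n → Bool) → Fin n → Bool} {X : Set (Fin n → Bool)}
    {x : Fin n → Bool} (hX : X ∈ MT f) (hx : x ∈ X) : Tprin f x = X := by
  have hsub := Tprin_subset hX.1 hx
  by_contra hne
  exact hX.2 _ (Tprin_isTrapspace f x) (hsub.ssubset_of_ne hne)

lemma mem_Mset_of_MT {f : (Fin n → Bool) → Fin n → Bool} {X : Set (Fin n → Bool)}
    {x : Fin n → Bool} (hX : X ∈ MT f) (hx : x ∈ X) : x ∈ Mset f :=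
  Set.mem_sUnion.mpr ⟨X, hX, hx⟩

lemma Tprin_mem_MT {f : (Fin n → Bool) → Fin n → Bool} {x : Fin n → Bool}
    (hx : x ∈ Mset f) : Tprin f x ∈ MT f := by
  obtain ⟨X, hX, hxX⟩ := Set.mem_sUnion.mp hx
  rw [Tprin_eq_of_MT hX hxX]
  exact hX

lemma isTrapspace_univ (f : (Fin n → Bool) → Fin n → Bool) :
    IsTrapspace f Set.univ := by
  refine ⟨⟨∅, ∅, ?_, ?_⟩, fun _ _ => trivial⟩
  · simp
  · ext z; simp

lemma MT_nonempty (f : (Fin n → Bool) → Fin n → Bool) : (MT f).Nonempty := by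
  have hwf : WellFounded ((· < ·) : Set (Fin n → Bool) → Set (Fin n → Bool) → Prop) :=
    (Finite.to_wellFoundedLT).wf
  obtain ⟨X, hX, hmin⟩ := hwf.has_min (trapspaces f) ⟨Set.univ, isTrapspace_univ f⟩
  exact ⟨X, hX, fun Y hY hYX => hmin Y hY hYX⟩

lemma delta_opp (X : Set (Fin n → Bool)) (x : Fin n → Bool) :
    delta x (opp X x) = {i | ∃ y ∈ X, y i ≠ x i} := by
  ext i
  simp only [delta, opp, Set.mem_setOf_eq]
  by_cases h : ∃ y ∈ X, y i ≠ x i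
  · simp only [if_pos h]
    simpa [h] using (Bool.not_ne_self (x i)).symm
  · simp [if_neg h, h]

lemma interval_opp {X : Set (Fin n → Bool)} {x : Fin n → Bool}
    (h : IsSubcube X) (hx : x ∈ X) : interval x (opp X x) = X := by
  rw [interval, delta_opp]
  nth_rewrite 2 [subcube_eq_cubeOf h hx]
  ext z
  simp only [Set.mem_setOf_eq, cubeOf, delta]
  constructor
  · intro hz i hiD
    by_contra hne
    exact hiD (hz (fun he => hne he.symm))
  · intro hz i hiD
    by_contra hD
    exact hiD ((hz i hD).symm)

lemma interval_neg (x : Fin n → Bool) :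
    interval x (fun i => !(x i)) = Set.univ := by
  refine Set.eq_univ_of_forall fun z => ?_
  intro i _
  simp [delta]

lemma opp_univ (x : Fin n → Bool) : opp Set.univ x = fun i => !(x i) := by
  funext i
  have h : ∃ y ∈ (Set.univ : Set (Fin n → Bool)), y i ≠ x i :=
    ⟨fun j => !(x j), trivial, Bool.not_ne_self (x i)⟩
  simp only [opp, if_pos h]

lemma aux31 {f g : (Fin n → Bool) → Fin n → Bool}
    (h : ∀ x ∈ Mset f ∪ Mset g, Tprin f x = Tprin g x) : MT f ⊆ MT g := by
  intro X hX
  obtain ⟨x, hx⟩ := subcube_nonempty hX.1.1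
  have hxM : x ∈ Mset f := mem_Mset_of_MT hX hx
  have hTf : Tprin f x = X := Tprin_eq_of_MT hX hx
  have hTg : Tprin g x = X := (h x (Or.inl hxM)).symm.trans hTf
  refine ⟨hTg ▸ Tprin_isTrapspace g x, ?_⟩
  intro Y hY hYX
  obtain ⟨y, hy⟩ := subcube_nonempty hY.1
  have hyX : y ∈ X := hYX.1 hy
  have h1 : Tprin f y ⊆ X := Tprin_subset hX.1 hyX
  have h2 : Tprin f y = X := by
    by_contra hne
    exact hX.2 _ (Tprin_isTrapspace f y) (h1.ssubset_of_ne hne)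
  have h3 : Tprin g y = X := (h y (Or.inl (mem_Mset_of_MT hX hyX))).symm.trans h2
  have h4 : Tprin g y ⊆ Y := Tprin_subset hY hy
  rw [h3] at h4
  exact hYX.not_subset h4

lemma aux_Mset {f g : (Fin n → Bool) → Fin n → Bool}
    (h : minExt f = minExt g) : Mset f ⊆ Mset g := by
  intro x hxf
  by_contra hxg
  have hg : minExt g x = fun i => !(x i) := by simp only [minExt, if_neg hxg]
  have hf : minExt f x = opp (Tprin f x) x := by simp only [minExt, if_pos hxf]
  have hopp : opp (Tprin f x) x = fun i => !(x i) := by rw [← hf, h, hg]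
  have hTf : Tprin f x = Set.univ := by
    have h5 := interval_opp (Tprin_isTrapspace f x).1 (mem_Tprin f x)
    rw [hopp, interval_neg] at h5
    exact h5.symm
  have hunivf : Set.univ ∈ MT f := hTf ▸ Tprin_mem_MT hxf
  obtain ⟨X, hX⟩ := MT_nonempty g
  obtain ⟨y, hy⟩ := subcube_nonempty hX.1.1
  have hyg : y ∈ Mset g := mem_Mset_of_MT hX hy
  have hyf : y ∈ Mset f := mem_Mset_of_MT hunivf trivial
  have hgy : minExt g y = opp (Tprin g y) y := by simp only [minExt, if_pos hyg]
  have hfy : minExt f y = opp (Tprin f y) y := by simp only [minExt, if_pos hyf]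
  have hTfy : Tprin f y = Set.univ := Tprin_eq_of_MT hunivf trivial
  have hoy : opp (Tprin g y) y = fun i => !(y i) := by
    rw [← hgy, ← h, hfy, hTfy, opp_univ]
  have hTgy : Tprin g y = Set.univ := by
    have h6 := interval_opp (Tprin_isTrapspace g y).1 (mem_Tprin g y)
    rw [hoy, interval_neg] at h6
    exact h6.symm
  have hug : Set.univ ∈ MT g := hTgy ▸ Tprin_mem_MT hyg
  exact hxg (mem_Mset_of_MT hug trivial)

end Stmt9Aux

/-- networks with the same minimal trapspaces. -/
theorem stmt9 (n : ℕ) (f g : (Fin n → Bool) → Fin n → Bool) :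
    List.TFAE [
      MT f = MT g,
      Mset f = Mset g ∧ ∀ x ∈ Mset f, Tprin f x = Tprin g x,
      ∀ x ∈ Mset f ∪ Mset g, Tprin f x = Tprin g x,
      minExt f = minExt g
    ] := by
  tfae_have 1 → 2 := by
    intro h
    have hM : Mset f = Mset g := by unfold Mset; rw [h]
    refine ⟨hM, fun x hx => ?_⟩
    have h1 : Tprin f x ∈ MT f := Tprin_mem_MT hx
    have h2 : Tprin f x ∈ MT g := h ▸ h1
    exact (Tprin_eq_of_MT h2 (mem_Tprin f x)).symm
  tfae_have 2 → 3 := by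
    rintro ⟨hM, h⟩ x hx
    rcases hx with hx | hx
    · exact h x hx
    · exact h x (hM.symm ▸ hx)
  tfae_have 3 → 1 := by
    intro h
    refine subset_antisymm (aux31 h) (aux31 fun x hx => ?_)
    rw [Set.union_comm] at hx
    exact (h x hx).symm
  tfae_have 3 → 4 := by
    intro h
    have h1 : MT f = MT g := by
      refine subset_antisymm (aux31 h) (aux31 fun x hx => ?_)
      rw [Set.union_comm] at hx
      exact (h x hx).symm
    have hM : Mset f = Mset g := by unfold Mset; rw [h1]
    funext x
    by_cases hx : x ∈ Mset f
    · have hxg : x ∈ Mset g := hM ▸ hx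
      simp only [minExt, if_pos hx, if_pos hxg, h x (Or.inl hx)]
    · have hxg : x ∉ Mset g := hM ▸ hx
      simp only [minExt, if_neg hx, if_neg hxg]
  tfae_have 4 → 3 := by
    intro h x hx
    have hM : Mset f = Mset g := subset_antisymm (aux_Mset h) (aux_Mset h.symm)
    have hxf : x ∈ Mset f := by
      rcases hx with hx | hx
      · exact hx
      · exact hM.symm ▸ hx
    have hxg : x ∈ Mset g := hM ▸ hxf
    have heq : opp (Tprin f x) x = opp (Tprin g x) x := by
      have h0 := congrFun h x
      simpa only [minExt, if_pos hxf, if_pos hxg] using h0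
    calc Tprin f x = interval x (opp (Tprin f x) x) :=
          (interval_opp (Tprin_isTrapspace f x).1 (mem_Tprin f x)).symm
      _ = interval x (opp (Tprin g x) x) := by rw [heq]
      _ = Tprin g x := interval_opp (Tprin_isTrapspace g x).1 (mem_Tprin g x)
  tfae_finish
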